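/- arXiv:1603.08045 — 7 statements merged into one kernel-verified Lean document; each statement's English description precedes it below -/
import Mathlib

section
/- Let f:[a,b]→ℝ be concave, n a positive integer, h=(b−a)/n, and x_k = a + k·h. Then (h/2)[f(a) + 2∑_{k=1}^{n−1} f(x_k) + f(b)] ≤ ∫_a^b f(t) dt ≤ h·∑_{k=1}^{n} f((x_{k−1}+x_k)/2). -/
open MeasureTheory Finset intervalIntegral

lemma concave_integrableOn {a b : ℝ} (hab : a < b) {f : ℝ → ℝ}
    (hf : ConcaveOn ℝ (Set.Icc a b) f) : IntegrableOn f (Set.Icc a b) := by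
  set m := (a + b) / 2 with hm
  have hmmem : m ∈ Set.Icc a b := by constructor <;> (simp only [hm]; linarith)
  have hlow : ∀ x ∈ Set.Icc a b, min (f a) (f b) ≤ f x := by
    intro x hx
    obtain ⟨hx1, hx2⟩ := hx
    have hba : (0:ℝ) < b - a := by linarith
    have h1 : (0:ℝ) ≤ (b - x) / (b - a) := div_nonneg (by linarith) (by linarith)
    have h2 : (0:ℝ) ≤ (x - a) / (b - a) := div_nonneg (by linarith) (by linarith)
    have h3 : (b - x)/(b-a) + (x-a)/(b-a) = 1 := by field_simp; ring
    have hcc := hf.2 (Set.left_mem_Icc.2 hab.le) (Set.right_mem_Icc.2 hab.le) h1 h2 h3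
    have hx' : ((b-x)/(b-a)) • a + ((x-a)/(b-a)) • b = x := by
      simp only [smul_eq_mul]; field_simp; ring
    rw [hx'] at hcc
    simp only [smul_eq_mul] at hcc
    have p1 := mul_le_mul_of_nonneg_left (min_le_left (f a) (f b)) h1
    have p2 := mul_le_mul_of_nonneg_left (min_le_right (f a) (f b)) h2
    have key : (b-x)/(b-a) * (f a ⊓ f b) + (x-a)/(b-a) * (f a ⊓ f b) = f a ⊓ f b := by
      rw [← add_mul, h3, one_mul]
    linarith
  have hupp : ∀ x ∈ Set.Icc a b, f x ≤ 2 * f m - min (f a) (f b) := by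
    intro x hx
    obtain ⟨hx1, hx2⟩ := hx
    have hx' : a + b - x ∈ Set.Icc a b := by constructor <;> linarith
    have h := hf.2 (Set.mem_Icc.2 ⟨hx1, hx2⟩) hx' (by norm_num : (0:ℝ) ≤ 1/2)
      (by norm_num : (0:ℝ) ≤ 1/2) (by norm_num)
    have hpt : (1/2 : ℝ) • x + (1/2 : ℝ) • (a + b - x) = m := by
      simp only [smul_eq_mul, hm]; ring
    rw [hpt] at h
    have := hlow _ hx'
    simp only [smul_eq_mul] at h
    linarith
  have hmeas : AEStronglyMeasurable f (volume.restrict (Set.Ioo a b)) := by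
    have hcont : ContinuousOn f (Set.Ioo a b) := by
      have := hf.continuousOn_interior
      rwa [interior_Icc] at this
    exact (hcont.aemeasurable measurableSet_Ioo).aestronglyMeasurable
  rw [integrableOn_Icc_iff_integrableOn_Ioo]
  set C : ℝ := |min (f a) (f b)| + |2 * f m - min (f a) (f b)| with hC
  have hCint : IntegrableOn (fun _ : ℝ => C) (Set.Ioo a b) :=
    integrableOn_const measure_Ioo_lt_top.ne
  refine Integrable.mono' hCint hmeas ?_
  refine (ae_restrict_iff' measurableSet_Ioo).2 (Filter.Eventually.of_forall ?_)
  intro x hx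
  have hx' : x ∈ Set.Icc a b := Set.Ioo_subset_Icc_self hx
  have h1 := hlow x hx'
  have h2 := hupp x hx'
  rw [Real.norm_eq_abs, abs_le]
  constructor
  · have := neg_abs_le (min (f a) (f b))
    have := abs_nonneg (2 * f m - min (f a) (f b))
    linarith
  · have := le_abs_self (2 * f m - min (f a) (f b))
    have := abs_nonneg (min (f a) (f b))
    linarith


-- trapezoid lower bound
lemma trap_le {p q : ℝ} (hpq : p < q) {f : ℝ → ℝ}
    (hc : ConcaveOn ℝ (Set.Icc p q) f) (hi : IntervalIntegrable f volume p q) :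
    (q - p) / 2 * (f p + f q) ≤ ∫ t in p..q, f t := by
  set s : ℝ := (f q - f p) / (q - p) with hs
  have hqp : (0:ℝ) < q - p := by linarith
  have hg : IntervalIntegrable (fun t => f p + s * (t - p)) volume p q := by
    apply IntervalIntegrable.add intervalIntegrable_const
    exact (IntervalIntegrable.sub intervalIntegrable_id intervalIntegrable_const).const_mul s
  have hmono : ∀ t ∈ Set.Icc p q, f p + s * (t - p) ≤ f t := by
    intro t ht
    obtain ⟨ht1, ht2⟩ := ht
    have h1 : (0:ℝ) ≤ (q - t) / (q - p) := div_nonneg (by linarith) (by linarith)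
    have h2 : (0:ℝ) ≤ (t - p) / (q - p) := div_nonneg (by linarith) (by linarith)
    have h3 : (q - t)/(q-p) + (t - p)/(q-p) = 1 := by field_simp; ring
    have hcc := hc.2 (Set.left_mem_Icc.2 hpq.le) (Set.right_mem_Icc.2 hpq.le) h1 h2 h3
    have hx' : ((q-t)/(q-p)) • p + ((t-p)/(q-p)) • q = t := by
      simp only [smul_eq_mul]; field_simp; ring
    rw [hx'] at hcc
    simp only [smul_eq_mul] at hcc
    have : f p + s * (t - p) = (q-t)/(q-p) * f p + (t-p)/(q-p) * f q := by
      rw [hs]; field_simp; ring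
    linarith [this ▸ hcc]
  have hle := intervalIntegral.integral_mono_on hpq.le hg hi hmono
  have hval : (∫ t in p..q, (f p + s * (t - p))) = (q - p)/2 * (f p + f q) := by
    have : (fun t => f p + s * (t - p)) = fun t => (f p - s * p) + s * t := by
      funext t; ring
    rw [this]
    rw [intervalIntegral.integral_add intervalIntegrable_const
      (intervalIntegrable_id.const_mul s), intervalIntegral.integral_const,
      intervalIntegral.integral_const_mul, integral_id]
    have hs' : s * (q - p) = f q - f p := by rw [hs]; exact div_mul_cancel₀ _ hqp.ne'
    rw [smul_eq_mul]; linear_combination ((q - p) / 2) * hs'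
  linarith [hval ▸ hle]

-- midpoint upper bound
lemma mid_ge {p q : ℝ} (hpq : p < q) {f : ℝ → ℝ}
    (hc : ConcaveOn ℝ (Set.Icc p q) f) (hi : IntervalIntegrable f volume p q) :
    (∫ t in p..q, f t) ≤ (q - p) * f ((p + q) / 2) := by
  have hrefl : (∫ t in p..q, f (p + q - t)) = ∫ t in p..q, f t := by
    have := intervalIntegral.integral_comp_sub_left f (p + q) (a := p) (b := q)
    simpa using this
  have hi2 : IntervalIntegrable (fun t => f (p + q - t)) volume p q := by
    have := (hi.comp_sub_left (p + q)).symm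
    simpa using this
  have hpt : ∀ t ∈ Set.Icc p q, f t + f (p + q - t) ≤ 2 * f ((p + q)/2) := by
    intro t ht
    obtain ⟨ht1, ht2⟩ := ht
    have ht' : p + q - t ∈ Set.Icc p q := by constructor <;> linarith
    have h := hc.2 (Set.mem_Icc.2 ⟨ht1, ht2⟩) ht' (by norm_num : (0:ℝ) ≤ 1/2)
      (by norm_num : (0:ℝ) ≤ 1/2) (by norm_num)
    have hmid : (1/2 : ℝ) • t + (1/2 : ℝ) • (p + q - t) = (p + q)/2 := by
      simp only [smul_eq_mul]; ring
    rw [hmid] at h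
    simp only [smul_eq_mul] at h
    linarith
  have hsum : (∫ t in p..q, (f t + f (p + q - t))) ≤ ∫ t in p..q, (2 * f ((p+q)/2) : ℝ) := by
    exact intervalIntegral.integral_mono_on hpq.le (hi.add hi2) intervalIntegrable_const hpt
  rw [intervalIntegral.integral_add hi hi2, hrefl, intervalIntegral.integral_const,
    smul_eq_mul] at hsum
  linarith

theorem generalized_hermite_hadamard_concave
    (a b : ℝ) (hab : a < b) (f : ℝ → ℝ)
    (hf : ConcaveOn ℝ (Set.Icc a b) f)
    (n : ℕ) (hn : 1 ≤ n)
    (h : ℝ) (hh : h = (b - a) / n)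
    (x : ℕ → ℝ) (hx : ∀ k, x k = a + k * h) :
    h / 2 * (f a + 2 * ∑ k ∈ Finset.Ico 1 n, f (x k) + f b) ≤ (∫ t in a..b, f t) ∧
    (∫ t in a..b, f t) ≤ h * ∑ k ∈ Finset.range n, f ((x k + x (k + 1)) / 2) := by
  have hn0 : (0:ℝ) < n := by exact_mod_cast Nat.pos_of_ne_zero (by omega)
  have hhpos : 0 < h := by rw [hh]; exact div_pos (by linarith) hn0
  have hx0 : x 0 = a := by simp [hx]
  have hxn : x n = b := by
    rw [hx, hh]; field_simp; ring
  have hstep : ∀ k : ℕ, x (k + 1) - x k = h := by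
    intro k; rw [hx, hx]; push_cast; ring
  have hlt : ∀ k : ℕ, x k < x (k + 1) := fun k => by
    have := hstep k; linarith
  have hmem : ∀ k : ℕ, k ≤ n → x k ∈ Set.Icc a b := by
    intro k hk
    rw [hx]
    constructor
    · nlinarith [hhpos.le, Nat.cast_nonneg (α := ℝ) k]
    · have : (k:ℝ) * h ≤ (n:ℝ) * h := by
        have : (k:ℝ) ≤ n := by exact_mod_cast hk
        nlinarith
      have hnh : (n:ℝ) * h = b - a := by rw [hh]; field_simp
      linarith
  have hsub : ∀ k : ℕ, k < n → Set.Icc (x k) (x (k+1)) ⊆ Set.Icc a b := by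
    intro k hk
    exact Set.Icc_subset_Icc (hmem k (by omega)).1 (hmem (k+1) (by omega)).2
  have hintOn : IntegrableOn f (Set.Icc a b) := concave_integrableOn hab hf
  have hint : ∀ k < n, IntervalIntegrable f volume (x k) (x (k+1)) := by
    intro k hk
    rw [intervalIntegrable_iff_integrableOn_Icc_of_le (hlt k).le]
    exact hintOn.mono_set (hsub k hk)
  have hconc : ∀ k < n, ConcaveOn ℝ (Set.Icc (x k) (x (k+1))) f := by
    intro k hk
    exact hf.subset (hsub k hk) (convex_Icc _ _)
  have hsplit : ∑ k ∈ Finset.range n, ∫ t in (x k)..(x (k+1)), f t = ∫ t in a..b, f t := by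
    rw [intervalIntegral.sum_integral_adjacent_intervals hint, hx0, hxn]
  constructor
  · -- trapezoid
    have hsum : ∑ k ∈ Finset.range n, (h/2 * (f (x k) + f (x (k+1)))) ≤
        ∑ k ∈ Finset.range n, ∫ t in (x k)..(x (k+1)), f t := by
      apply Finset.sum_le_sum
      intro k hk
      rw [Finset.mem_range] at hk
      have := trap_le (hlt k) (hconc k hk) (hint k hk)
      rw [hstep k] at this
      exact this
    rw [hsplit] at hsum
    refine le_trans (le_of_eq ?_) hsum
    -- algebra
    rw [← Finset.mul_sum]
    congr 1
    have e1 : ∑ k ∈ Finset.range n, (f (x k) + f (x (k+1)))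
        = ∑ k ∈ Finset.range n, f (x k) + ∑ k ∈ Finset.range n, f (x (k+1)) :=
      Finset.sum_add_distrib
    have e2 : ∑ k ∈ Finset.range n, f (x k) = f a + ∑ k ∈ Finset.Ico 1 n, f (x k) := by
      rw [Finset.range_eq_Ico, Finset.sum_eq_sum_Ico_succ_bot (by omega), hx0]
    have e3 : ∑ k ∈ Finset.range n, f (x (k+1)) = ∑ k ∈ Finset.Ico 1 n, f (x k) + f b := by
      have : ∑ k ∈ Finset.range n, f (x (k+1)) = ∑ k ∈ Finset.Ico 1 (n+1), f (x k) := by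
        rw [Finset.sum_Ico_eq_sum_range]
        simp [add_comm]
      rw [this, Finset.sum_Ico_succ_top (by omega), hxn]
    rw [e1, e2, e3]; ring
  · -- midpoint
    rw [← hsplit, Finset.mul_sum]
    apply Finset.sum_le_sum
    intro k hk
    rw [Finset.mem_range] at hk
    have := mid_ge (hlt k) (hconc k hk) (hint k hk)
    rw [hstep k] at this
    exact this
end

section
/- Let f:[a,b]→ℝ be convex. Then (b−a)/2 · [f((3a+b)/4) + f((a+3b)/4)] ≤ ∫_a^b f(t) dt ≤ (b−a)/4 · [f(a) + 2f((a+b)/2) + f(b)]. -/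
open MeasureTheory

-- bound: for x in Icc a b, 2*f((a+b)/2) - max (f a) (f b) ≤ f x ≤ max (f a) (f b)
lemma convexOn_bddIcc (a b : ℝ) (hab : a ≤ b) (f : ℝ → ℝ)
    (hf : ConvexOn ℝ (Set.Icc a b) f) {x : ℝ} (hx : x ∈ Set.Icc a b) :
    2 * f ((a + b) / 2) - max (f a) (f b) ≤ f x ∧ f x ≤ max (f a) (f b) := by
  have hsub : x ∈ segment ℝ a b := by
    rwa [← segment_eq_Icc hab] at hx
  have hxle : f x ≤ max (f a) (f b) :=
    hf.le_max_of_mem_segment (Set.left_mem_Icc.2 hab) (Set.right_mem_Icc.2 hab) hsub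
  have hy : a + b - x ∈ Set.Icc a b := by
    constructor <;> [linarith [hx.2]; linarith [hx.1]]
  have hyle : f (a + b - x) ≤ max (f a) (f b) := by
    have : a + b - x ∈ segment ℝ a b := by rwa [← segment_eq_Icc hab] at hy
    exact hf.le_max_of_mem_segment (Set.left_mem_Icc.2 hab) (Set.right_mem_Icc.2 hab) this
  have hmid : f ((a + b) / 2) ≤ (f x + f (a + b - x)) / 2 := by
    have := hf.2 hx hy (by norm_num : (0:ℝ) ≤ 1/2) (by norm_num : (0:ℝ) ≤ 1/2) (by norm_num)
    have hx2 : (1/2 : ℝ) • x + (1/2 : ℝ) • (a + b - x) = (a + b) / 2 := by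
      simp only [smul_eq_mul]; ring
    rw [hx2] at this
    simp only [smul_eq_mul] at this
    linarith
  exact ⟨by linarith, hxle⟩

lemma convexOn_intervalIntegrable (a b : ℝ) (hab : a ≤ b) (f : ℝ → ℝ)
    (hf : ConvexOn ℝ (Set.Icc a b) f) : IntervalIntegrable f volume a b := by
  set M : ℝ := |max (f a) (f b)| + |2 * f ((a + b) / 2) - max (f a) (f b)| with hM
  have hbd : ∀ x ∈ Set.Icc a b, |f x| ≤ M := by
    intro x hx
    obtain ⟨h1, h2⟩ := convexOn_bddIcc a b hab f hf hx
    rw [abs_le]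
    constructor
    · have := neg_abs_le (2 * f ((a + b) / 2) - max (f a) (f b))
      have := abs_nonneg (max (f a) (f b))
      simp only [hM]; linarith
    · have := le_abs_self (max (f a) (f b))
      have := abs_nonneg (2 * f ((a + b) / 2) - max (f a) (f b))
      simp only [hM]; linarith
  rw [intervalIntegrable_iff_integrableOn_Ioo_of_le hab]
  have hcont : ContinuousOn f (Set.Ioo a b) := by
    have := (hf.subset Set.Ioo_subset_Icc_self (convex_Ioo a b)).continuousOn isOpen_Ioo
    exact this
  refine ⟨(hcont.aemeasurable measurableSet_Ioo).aestronglyMeasurable, ?_⟩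
  haveI : IsFiniteMeasure (volume.restrict (Set.Ioo a b)) :=
    ⟨by simpa using (measure_Ioo_lt_top (a := a) (b := b))⟩
  apply MeasureTheory.HasFiniteIntegral.of_bounded (C := M)
  · filter_upwards [ae_restrict_mem measurableSet_Ioo] with x hx
    exact hbd x (Set.Ioo_subset_Icc_self hx)

-- trapezoid upper bound on a subinterval
lemma trapezoid_sub (a b c d : ℝ) (hab : a ≤ b) (hcd : c < d)
    (hsub : Set.Icc c d ⊆ Set.Icc a b) (f : ℝ → ℝ)
    (hf : ConvexOn ℝ (Set.Icc a b) f) :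
    (∫ t in c..d, f t) ≤ (d - c) * (f c + f d) / 2 := by
  have hf' : ConvexOn ℝ (Set.Icc c d) f := hf.subset hsub (convex_Icc c d)
  have hint : IntervalIntegrable f volume c d :=
    convexOn_intervalIntegrable c d hcd.le f hf'
  have key : (∫ t in c..d, f t) ≤
      ∫ t in c..d, ((d - t) / (d - c) * f c + (t - c) / (d - c) * f d) := by
    apply intervalIntegral.integral_mono_on hcd.le hint
    · apply Continuous.intervalIntegrable
      fun_prop
    · intro t ht
      have h1 : (0:ℝ) ≤ (d - t) / (d - c) := by
        apply div_nonneg <;> linarith [ht.1, ht.2]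
      have h2 : (0:ℝ) ≤ (t - c) / (d - c) := by
        apply div_nonneg <;> linarith [ht.1, ht.2]
      have hne : d - c ≠ 0 := by linarith
      have h3 : (d - t) / (d - c) + (t - c) / (d - c) = 1 := by
        rw [← add_div]
        rw [show d - t + (t - c) = d - c by ring, div_self hne]
      have := hf'.2 (Set.left_mem_Icc.2 hcd.le) (Set.right_mem_Icc.2 hcd.le) h1 h2 h3
      simp only [smul_eq_mul] at this
      have hx : (d - t) / (d - c) * c + (t - c) / (d - c) * d = t := by
        field_simp; ring
      rw [hx] at this
      exact this
  refine key.trans_eq ?_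
  have hcd' : d - c ≠ 0 := by linarith
  rw [show (fun t => ((d - t) / (d - c) * f c + (t - c) / (d - c) * f d)) =
      (fun t => (d * f c - c * f d) / (d - c) + t * ((f d - f c) / (d - c))) by
    funext t; field_simp; ring]
  rw [intervalIntegral.integral_add intervalIntegrable_const
    (IntervalIntegrable.mul_const intervalIntegral.intervalIntegrable_id _),
    intervalIntegral.integral_const, intervalIntegral.integral_mul_const,
    integral_id]
  field_simp
  ring_nf
  field_simp
  ring

-- midpoint lower bound on a subinterval
lemma midpoint_sub (a b c d : ℝ) (hab : a ≤ b) (hcd : c < d)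
    (hsub : Set.Icc c d ⊆ Set.Icc a b) (f : ℝ → ℝ)
    (hf : ConvexOn ℝ (Set.Icc a b) f) :
    (d - c) * f ((c + d) / 2) ≤ ∫ t in c..d, f t := by
  have hf' : ConvexOn ℝ (Set.Icc c d) f := hf.subset hsub (convex_Icc c d)
  have hint : IntervalIntegrable f volume c d :=
    convexOn_intervalIntegrable c d hcd.le f hf'
  have hint' : IntervalIntegrable (fun t => f (c + d - t)) volume c d := by
    have := (hint.comp_sub_left (c + d)).symm
    simpa using this
  have hrefl : (∫ t in c..d, f (c + d - t)) = ∫ t in c..d, f t := by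
    rw [intervalIntegral.integral_comp_sub_left f (c + d)]
    norm_num
  have key : (d - c) * (2 * f ((c + d) / 2)) ≤
      ∫ t in c..d, (f t + f (c + d - t)) := by
    have hle : ∀ t ∈ Set.Icc c d, 2 * f ((c + d) / 2) ≤ f t + f (c + d - t) := by
      intro t ht
      have hy : c + d - t ∈ Set.Icc c d := by
        constructor <;> [linarith [ht.2]; linarith [ht.1]]
      have := hf'.2 ht hy (by norm_num : (0:ℝ) ≤ 1/2) (by norm_num : (0:ℝ) ≤ 1/2)
        (by norm_num)
      have hx2 : (1/2 : ℝ) • t + (1/2 : ℝ) • (c + d - t) = (c + d) / 2 := by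
        simp only [smul_eq_mul]; ring
      rw [hx2] at this
      simp only [smul_eq_mul] at this
      linarith
    calc (d - c) * (2 * f ((c + d) / 2))
        = ∫ _ in c..d, 2 * f ((c + d) / 2) := by
          rw [intervalIntegral.integral_const, smul_eq_mul]
      _ ≤ ∫ t in c..d, (f t + f (c + d - t)) :=
          intervalIntegral.integral_mono_on hcd.le intervalIntegrable_const
            (hint.add hint') hle
  rw [intervalIntegral.integral_add hint hint', hrefl] at key
  linarith

theorem hermite_hadamard_n2
    (a b : ℝ) (hab : a < b) (f : ℝ → ℝ)
    (hf : ConvexOn ℝ (Set.Icc a b) f) :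
    (b - a) / 2 * (f ((3 * a + b) / 4) + f ((a + 3 * b) / 4)) ≤ (∫ t in a..b, f t) ∧
    (∫ t in a..b, f t) ≤ (b - a) / 4 * (f a + 2 * f ((a + b) / 2) + f b) := by
  set m := (a + b) / 2 with hm
  have ham : a < m := by rw [hm]; linarith
  have hmb : m < b := by rw [hm]; linarith
  have hsub1 : Set.Icc a m ⊆ Set.Icc a b := Set.Icc_subset_Icc le_rfl hmb.le
  have hsub2 : Set.Icc m b ⊆ Set.Icc a b := Set.Icc_subset_Icc ham.le le_rfl
  have hi1 : IntervalIntegrable f volume a m :=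
    convexOn_intervalIntegrable a m ham.le f (hf.subset hsub1 (convex_Icc _ _))
  have hi2 : IntervalIntegrable f volume m b :=
    convexOn_intervalIntegrable m b hmb.le f (hf.subset hsub2 (convex_Icc _ _))
  have hsplit : (∫ t in a..b, f t) = (∫ t in a..m, f t) + ∫ t in m..b, f t :=
    (intervalIntegral.integral_add_adjacent_intervals hi1 hi2).symm
  have hL1 := midpoint_sub a b a m hab.le ham hsub1 f hf
  have hL2 := midpoint_sub a b m b hab.le hmb hsub2 f hf
  have hR1 := trapezoid_sub a b a m hab.le ham hsub1 f hf
  have hR2 := trapezoid_sub a b m b hab.le hmb hsub2 f hf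
  have he1 : (a + m) / 2 = (3 * a + b) / 4 := by rw [hm]; ring
  have he2 : (m + b) / 2 = (a + 3 * b) / 4 := by rw [hm]; ring
  rw [he1] at hL1; rw [he2] at hL2
  constructor
  · rw [hsplit]
    have h1 : (m - a) = (b - a) / 2 := by rw [hm]; ring
    have h2 : (b - m) = (b - a) / 2 := by rw [hm]; ring
    rw [h1] at hL1; rw [h2] at hL2
    linarith
  · rw [hsplit]
    have h1 : (m - a) = (b - a) / 2 := by rw [hm]; ring
    have h2 : (b - m) = (b - a) / 2 := by rw [hm]; ring
    rw [h1] at hR1; rw [h2] at hR2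
    linarith
end

section
/- Let f:[a,b]→ℝ₊ be a nonnegative convex function, n a positive integer, h=(b−a)/n, x_k = a + k·h. Then for every y∈[a,b]: ∫_a^b f(x) dx − (b−a)·f(y) ≤ [h/2 + max_{1≤j≤n} |y − (x_{j−1}+x_j)/2|] · [f(a) + 2∑_{j=1}^{n−1} f(x_j) + f(b)]. -/
open MeasureTheory Finset

private lemma conv_intervalIntegrable
    (a b : ℝ) (f : ℝ → ℝ)
    (hf : ConvexOn ℝ (Set.Icc a b) f)
    (hpos : ∀ t ∈ Set.Icc a b, 0 ≤ f t)
    (c d : ℝ) (hac : a ≤ c) (hcd : c ≤ d) (hdb : d ≤ b) :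
    IntervalIntegrable f MeasureTheory.volume c d := by
  have hab : a ≤ b := le_trans (le_trans hac hcd) hdb
  have hcont : ContinuousOn f (Set.Ioo a b) := by
    have := hf.continuousOn_interior
    rwa [interior_Icc] at this
  have hmeas : AEStronglyMeasurable f (volume.restrict (Set.Ioo a b)) :=
    hcont.aestronglyMeasurable measurableSet_Ioo
  have hbd : ∀ t ∈ Set.Ioo a b, ‖f t‖ ≤ max (f a) (f b) := by
    intro t ht
    have ht' : t ∈ Set.Icc a b := Set.Ioo_subset_Icc_self ht
    have h1 : f t ≤ max (f a) (f b) := by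
      apply hf.le_on_segment (Set.left_mem_Icc.2 hab) (Set.right_mem_Icc.2 hab)
      rw [segment_eq_Icc hab]; exact ht'
    have h0 : 0 ≤ f t := hpos t ht'
    rwa [Real.norm_eq_abs, abs_of_nonneg h0]
  have hint : IntegrableOn f (Set.Ioo a b) volume := by
    refine ⟨hmeas, ?_⟩
    apply MeasureTheory.HasFiniteIntegral.restrict_of_bounded
      (C := max (f a) (f b)) measure_Ioo_lt_top
    exact (MeasureTheory.ae_restrict_iff' measurableSet_Ioo).2 (Filter.Eventually.of_forall hbd)
  rw [intervalIntegrable_iff_integrableOn_Ioo_of_le hcd]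
  exact hint.mono_set (Set.Ioo_subset_Ioo hac hdb)

private lemma trapezoid
    (a b c d : ℝ) (f : ℝ → ℝ)
    (hf : ConvexOn ℝ (Set.Icc a b) f)
    (hac : a ≤ c) (hcd : c ≤ d) (hdb : d ≤ b)
    (hint : IntervalIntegrable f MeasureTheory.volume c d) :
    (∫ t in c..d, f t) ≤ (d - c) * (f c + f d) / 2 := by
  rcases eq_or_lt_of_le hcd with rfl | hlt
  · simp
  have hab : a ≤ b := le_trans (le_trans hac hcd) hdb
  have hdc : (0:ℝ) < d - c := by linarith
  set β : ℝ := (f d - f c) / (d - c) with hβ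
  set g : ℝ → ℝ := fun t => (f c - c * β) + β * t with hg
  have hgcont : Continuous g := by continuity
  have hle : ∀ t ∈ Set.Icc c d, f t ≤ g t := by
    intro t ht
    obtain ⟨h1, h2⟩ := ht
    have hw1 : (0:ℝ) ≤ (d - t) / (d - c) := div_nonneg (by linarith) hdc.le
    have hw2 : (0:ℝ) ≤ (t - c) / (d - c) := div_nonneg (by linarith) hdc.le
    have hsum : (d - t) / (d - c) + (t - c) / (d - c) = 1 := by
      field_simp
      ring
    have hc : c ∈ Set.Icc a b := ⟨hac, le_trans hcd hdb⟩
    have hd : d ∈ Set.Icc a b := ⟨le_trans hac hcd, hdb⟩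
    have key := hf.2 hc hd hw1 hw2 hsum
    have ht' : ((d - t) / (d - c)) • c + ((t - c) / (d - c)) • d = t := by
      simp only [smul_eq_mul]
      field_simp
      ring
    rw [ht'] at key
    calc f t ≤ ((d - t) / (d - c)) • f c + ((t - c) / (d - c)) • f d := key
      _ = g t := by
        simp only [smul_eq_mul, hg, hβ]
        field_simp
        ring
  have hgint : IntervalIntegrable g MeasureTheory.volume c d :=
    hgcont.intervalIntegrable _ _
  have hmono : (∫ t in c..d, f t) ≤ ∫ t in c..d, g t :=
    intervalIntegral.integral_mono_on hcd hint hgint hle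
  have hgval : (∫ t in c..d, g t) = (d - c) * (f c + f d) / 2 := by
    rw [hg]
    rw [intervalIntegral.integral_add intervalIntegrable_const
      ((by continuity : Continuous fun t : ℝ => β * t).intervalIntegrable _ _)]
    rw [intervalIntegral.integral_const, intervalIntegral.integral_const_mul, integral_id]
    simp only [smul_eq_mul, hβ]
    field_simp
    ring
  linarith

theorem ostrowski_convex_max_midpoint
    (a b : ℝ) (hab : a < b) (f : ℝ → ℝ)
    (hf : ConvexOn ℝ (Set.Icc a b) f)
    (hpos : ∀ t ∈ Set.Icc a b, 0 ≤ f t)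
    (n : ℕ) (hn : 1 ≤ n)
    (h : ℝ) (hh : h = (b - a) / n)
    (x : ℕ → ℝ) (hx : ∀ k, x k = a + k * h)
    (y : ℝ) (hy : y ∈ Set.Icc a b)
    (M : ℝ) (hM : IsGreatest ((fun j => |y - (x j + x (j + 1)) / 2|) '' Set.Iio n) M) :
    (∫ t in a..b, f t) - (b - a) * f y ≤
      (h / 2 + M) * (f a + 2 * ∑ k ∈ Finset.Ico 1 n, f (x k) + f b) := by
  have hn0 : (0:ℝ) < n := by exact_mod_cast Nat.lt_of_lt_of_le Nat.zero_lt_one hn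
  have hh0 : 0 < h := by rw [hh]; apply div_pos (by linarith) hn0
  have hx0 : x 0 = a := by simp [hx]
  have hxn : x n = b := by
    rw [hx, hh]; field_simp
    ring
  have hxmem : ∀ k, k ≤ n → x k ∈ Set.Icc a b := by
    intro k hk
    rw [hx]
    constructor
    · nlinarith [Nat.cast_nonneg (α := ℝ) k]
    · have : (k:ℝ) * h ≤ (n:ℝ) * h := by
        apply mul_le_mul_of_nonneg_right _ hh0.le
        exact_mod_cast hk
      have hnh : (n:ℝ) * h = b - a := by rw [hh]; field_simp
      linarith
  have hstep : ∀ k, x (k+1) - x k = h := by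
    intro k
    rw [hx, hx]; push_cast; ring
  have hintk : ∀ k < n, IntervalIntegrable f MeasureTheory.volume (x k) (x (k+1)) := by
    intro k hk
    have hk1 : k + 1 ≤ n := hk
    have h1 := hxmem k (Nat.le_of_lt hk)
    have h2 := hxmem (k+1) hk1
    apply conv_intervalIntegrable a b f hf hpos _ _ h1.1 _ h2.2
    have := hstep k; linarith
  have hsplit : (∑ k ∈ Finset.range n, ∫ t in (x k)..(x (k+1)), f t) = ∫ t in a..b, f t := by
    rw [intervalIntegral.sum_integral_adjacent_intervals hintk, hx0, hxn]
  have htrap : ∀ k < n, (∫ t in (x k)..(x (k+1)), f t) ≤ h * (f (x k) + f (x (k+1))) / 2 := by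
    intro k hk
    have h1 := hxmem k (Nat.le_of_lt hk)
    have h2 := hxmem (k+1) hk
    have := trapezoid a b (x k) (x (k+1)) f hf h1.1 (by have := hstep k; linarith) h2.2
      (hintk k hk)
    rwa [hstep k] at this
  -- sum of trapezoid bounds
  have hsum : (∫ t in a..b, f t) ≤
      (h/2) * (f a + 2 * ∑ k ∈ Finset.Ico 1 n, f (x k) + f b) := by
    rw [← hsplit]
    calc (∑ k ∈ Finset.range n, ∫ t in (x k)..(x (k+1)), f t)
        ≤ ∑ k ∈ Finset.range n, h * (f (x k) + f (x (k+1))) / 2 := by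
          apply Finset.sum_le_sum
          intro k hk
          exact htrap k (Finset.mem_range.1 hk)
      _ = (h/2) * (∑ k ∈ Finset.range n, f (x k) + ∑ k ∈ Finset.range n, f (x (k+1))) := by
          rw [← Finset.sum_add_distrib, Finset.mul_sum]
          apply Finset.sum_congr rfl
          intro k _; ring
      _ = (h/2) * (f a + 2 * ∑ k ∈ Finset.Ico 1 n, f (x k) + f b) := by
          congr 1
          have e1 : (∑ k ∈ Finset.range n, f (x k)) = f a + ∑ k ∈ Finset.Ico 1 n, f (x k) := by
            rw [Finset.range_eq_Ico, Finset.sum_eq_sum_Ico_succ_bot (Nat.lt_of_lt_of_le Nat.zero_lt_one hn), hx0]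
          have e2 : (∑ k ∈ Finset.range n, f (x (k+1))) = (∑ k ∈ Finset.Ico 1 n, f (x k)) + f b := by
            have : (∑ k ∈ Finset.range n, f (x (k+1))) = ∑ k ∈ Finset.Ico 1 (n+1), f (x k) := by
              rw [Finset.sum_Ico_eq_sum_range]
              simp [add_comm]
            rw [this, Finset.sum_Ico_succ_top hn, hxn]
          rw [e1, e2]; ring
  -- nonnegativity facts
  have hS : 0 ≤ f a + 2 * ∑ k ∈ Finset.Ico 1 n, f (x k) + f b := by
    have h1 : 0 ≤ f a := hpos a (Set.left_mem_Icc.2 hab.le)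
    have h2 : 0 ≤ f b := hpos b (Set.right_mem_Icc.2 hab.le)
    have h3 : 0 ≤ ∑ k ∈ Finset.Ico 1 n, f (x k) := by
      apply Finset.sum_nonneg
      intro k hk
      obtain ⟨_, hk2⟩ := Finset.mem_Ico.1 hk
      exact hpos _ (hxmem k (Nat.le_of_lt hk2))
    linarith
  have hMnn : 0 ≤ M := by
    have h0 : |y - (x 0 + x (0 + 1)) / 2| ∈ ((fun j => |y - (x j + x (j + 1)) / 2|) '' Set.Iio n) :=
      Set.mem_image_of_mem _ (Nat.lt_of_lt_of_le Nat.zero_lt_one hn)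
    exact le_trans (abs_nonneg _) (hM.2 h0)
  have hfy : 0 ≤ f y := hpos y hy
  nlinarith [mul_nonneg hMnn hS, mul_nonneg (sub_nonneg.2 hab.le) hfy]
end

section
/- Let f:[a,b]→ℝ₊ be a nonnegative convex function, n a positive integer, h=(b−a)/n, x_k = a+k·h. Then (1/(b−a))∫_a^b f(u) du − (1/n)∑_{j=1}^{n} f((x_{j−1}+x_j)/2) − (1/n)∑_{j=1}^{n−1} f(x_j) ≤ (f(a)+f(b))/(2n). -/
open MeasureTheory Finset intervalIntegral

lemma my_integrableOn {a b : ℝ} (hab : a < b) {f : ℝ → ℝ}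
    (hf : ConvexOn ℝ (Set.Icc a b) f)
    (hpos : ∀ t ∈ Set.Icc a b, 0 ≤ f t) :
    IntegrableOn f (Set.Icc a b) := by
  have hres : volume.restrict (Set.Icc a b) = volume.restrict (Set.Ioo a b) :=
    Measure.restrict_congr_set Ioo_ae_eq_Icc.symm
  have hcont : ContinuousOn f (Set.Ioo a b) := by
    have := hf.continuousOn_interior
    rwa [interior_Icc] at this
  have hmeas : AEStronglyMeasurable f (volume.restrict (Set.Icc a b)) := by
    rw [hres]
    exact hcont.aestronglyMeasurable measurableSet_Ioo
  refine Integrable.mono' (g := fun _ => max (f a) (f b))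
    (integrableOn_const (by simp)) hmeas ?_
  refine (ae_restrict_iff' measurableSet_Icc).2 (ae_of_all _ fun t ht => ?_)
  rw [Real.norm_eq_abs, abs_of_nonneg (hpos t ht)]
  exact hf.le_on_segment (Set.left_mem_Icc.2 hab.le) (Set.right_mem_Icc.2 hab.le)
    (by rwa [segment_eq_Icc hab.le])

lemma my_trapezoid {a b : ℝ} (hab : a < b) {f : ℝ → ℝ}
    (hf : ConvexOn ℝ (Set.Icc a b) f)
    (hpos : ∀ t ∈ Set.Icc a b, 0 ≤ f t)
    {c d : ℝ} (hc : c ∈ Set.Icc a b) (hd : d ∈ Set.Icc a b) (hcd : c < d) :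
    ∫ u in c..d, f u ≤ (d - c) * (f c + f d) / 2 := by
  set B := (f d - f c) / (d - c) with hB
  set A := f c - B * c with hA
  have hdc : (0:ℝ) < d - c := by linarith
  have hint : IntervalIntegrable f volume c d := by
    have := (my_integrableOn hab hf hpos).mono_set
      (Set.Icc_subset_Icc hc.1 hd.2)
    rw [← Set.uIcc_of_le hcd.le] at this
    exact this.intervalIntegrable
  have hle : ∀ u ∈ Set.Icc c d, f u ≤ A + B * u := by
    intro u hu
    have ht0 : 0 ≤ (d - u) / (d - c) := div_nonneg (by linarith [hu.2]) hdc.le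
    have ht1 : 0 ≤ (u - c) / (d - c) := div_nonneg (by linarith [hu.1]) hdc.le
    have hts : (d - u) / (d - c) + (u - c) / (d - c) = 1 := by field_simp; ring
    have h2 := hf.2 hc hd ht0 ht1 hts
    have heq : ((d - u) / (d - c)) • c + ((u - c) / (d - c)) • d = u := by
      rw [smul_eq_mul, smul_eq_mul, div_mul_eq_mul_div, div_mul_eq_mul_div, ← add_div, div_eq_iff hdc.ne']; ring
    rw [heq] at h2
    calc f u ≤ ((d - u) / (d - c)) * f c + ((u - c) / (d - c)) * f d := h2
      _ = A + B * u := by rw [hA, hB]; field_simp; ring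
  have hintL : IntervalIntegrable (fun u => A + B * u) volume c d :=
    (intervalIntegrable_const.add ((intervalIntegrable_id).const_mul B))
  calc ∫ u in c..d, f u ≤ ∫ u in c..d, (A + B * u) := by
        apply intervalIntegral.integral_mono_on hcd.le hint hintL
        exact hle
    _ = A * (d - c) + B * ((d^2 - c^2)/2) := by
        rw [intervalIntegral.integral_add intervalIntegrable_const
          ((intervalIntegrable_id).const_mul B), intervalIntegral.integral_const,
          intervalIntegral.integral_const_mul, integral_id, smul_eq_mul]
        ring
    _ = (d - c) * (f c + f d) / 2 := by rw [hA, hB]; field_simp; ring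

lemma my_tel (g : ℕ → ℝ) (n : ℕ) (hn : 1 ≤ n) :
    ∑ k ∈ Finset.range n, (g k + g (k+1))/2 = (g 0 + g n)/2 + ∑ k ∈ Finset.Ico 1 n, g k := by
  induction n with
  | zero => omega
  | succ m ih =>
    rcases Nat.eq_or_lt_of_le hn with h1 | h1
    · simp [← h1]
    · have hm : 1 ≤ m := by omega
      rw [Finset.sum_range_succ, ih hm, Finset.sum_Ico_succ_top hm]
      ring

theorem ostrowski_convex_combined
    (a b : ℝ) (hab : a < b) (f : ℝ → ℝ)
    (hf : ConvexOn ℝ (Set.Icc a b) f)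
    (hpos : ∀ t ∈ Set.Icc a b, 0 ≤ f t)
    (n : ℕ) (hn : 1 ≤ n)
    (h : ℝ) (hh : h = (b - a) / n)
    (x : ℕ → ℝ) (hx : ∀ k, x k = a + k * h) :
    (1 / (b - a)) * (∫ u in a..b, f u)
      - (1 / n) * ∑ k ∈ Finset.range n, f ((x k + x (k + 1)) / 2)
      - (1 / n) * ∑ k ∈ Finset.Ico 1 n, f (x k)
      ≤ (f a + f b) / (2 * n) := by
  have hn0 : (0:ℝ) < n := by exact_mod_cast hn
  have hh0 : 0 < h := by rw [hh]; exact div_pos (by linarith) hn0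
  have hmem : ∀ k ≤ n, x k ∈ Set.Icc a b := by
    intro k hk
    rw [hx]
    constructor
    · nlinarith [Nat.cast_nonneg (α := ℝ) k]
    · have : (k:ℝ) * h ≤ n * h := by
        have : (k:ℝ) ≤ n := by exact_mod_cast hk
        nlinarith
      have hnh : (n:ℝ) * h = b - a := by rw [hh]; field_simp
      linarith
  have hstep : ∀ k, x (k+1) - x k = h := by
    intro k; rw [hx, hx]; push_cast; ring
  have hx0 : x 0 = a := by rw [hx]; simp
  have hxn : x n = b := by
    rw [hx, hh]; field_simp; ring
  -- integrability on each interval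
  have hint : ∀ k < n, IntervalIntegrable f volume (x k) (x (k+1)) := by
    intro k hk
    have h1 := hmem k hk.le
    have h2 := hmem (k+1) hk
    have := (my_integrableOn hab hf hpos).mono_set (Set.Icc_subset_Icc h1.1 h2.2)
    rw [← Set.uIcc_of_le (by linarith [hstep k, hh0] : x k ≤ x (k+1))] at this
    exact this.intervalIntegrable
  have hsplit : ∫ u in a..b, f u = ∑ k ∈ Finset.range n, ∫ u in (x k)..(x (k+1)), f u := by
    rw [← hx0, ← hxn]
    exact (intervalIntegral.sum_integral_adjacent_intervals hint).symm
  have hlt : ∀ k, x k < x (k+1) := fun k => by linarith [hstep k]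
  have htrap : ∫ u in a..b, f u ≤ ∑ k ∈ Finset.range n, h * (f (x k) + f (x (k+1))) / 2 := by
    rw [hsplit]
    apply Finset.sum_le_sum
    intro k hk
    have hk' := Finset.mem_range.1 hk
    calc ∫ u in (x k)..(x (k+1)), f u
        ≤ (x (k+1) - x k) * (f (x k) + f (x (k+1))) / 2 :=
          my_trapezoid hab hf hpos (hmem k hk'.le) (hmem (k+1) hk') (hlt k)
      _ = h * (f (x k) + f (x (k+1))) / 2 := by rw [hstep]
  have hsum : ∑ k ∈ Finset.range n, h * (f (x k) + f (x (k+1))) / 2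
      = h * ((f a + f b)/2 + ∑ k ∈ Finset.Ico 1 n, f (x k)) := by
    have := my_tel (fun k => f (x k)) n hn
    have e : ∑ k ∈ Finset.range n, h * (f (x k) + f (x (k+1))) / 2
        = h * ∑ k ∈ Finset.range n, (f (x k) + f (x (k+1)))/2 := by
      rw [Finset.mul_sum]; congr 1; ext k; ring
    rw [e, this]
    simp only [hx0, hxn]
  have hM : 0 ≤ ∑ k ∈ Finset.range n, f ((x k + x (k + 1)) / 2) := by
    apply Finset.sum_nonneg
    intro k hk
    have hk' := Finset.mem_range.1 hk
    apply hpos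
    have h1 := hmem k hk'.le
    have h2 := hmem (k+1) hk'
    constructor
    · have := h1.1; have := h2.1; linarith
    · have := h1.2; have := h2.2; linarith
  have hba : (0:ℝ) < b - a := by linarith
  have key : (1/(b-a)) * (∫ u in a..b, f u)
      ≤ (1/n) * ((f a + f b)/2 + ∑ k ∈ Finset.Ico 1 n, f (x k)) := by
    have h1 : (1/(b-a)) * (∫ u in a..b, f u)
        ≤ (1/(b-a)) * (h * ((f a + f b)/2 + ∑ k ∈ Finset.Ico 1 n, f (x k))) := by
      apply mul_le_mul_of_nonneg_left _ (by positivity)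
      rw [← hsum]; exact htrap
    have h2 : (1/(b-a)) * h = 1/n := by rw [hh]; field_simp
    calc (1/(b-a)) * (∫ u in a..b, f u)
        ≤ (1/(b-a)) * h * ((f a + f b)/2 + ∑ k ∈ Finset.Ico 1 n, f (x k)) := by
          rw [mul_assoc]; exact h1
      _ = (1/n) * ((f a + f b)/2 + ∑ k ∈ Finset.Ico 1 n, f (x k)) := by rw [h2]
  have e2 : 0 ≤ (1/(n:ℝ)) * ∑ k ∈ Finset.range n, f ((x k + x (k + 1)) / 2) := by positivity
  have h3 : (1/(n:ℝ)) * ((f a + f b)/2 + ∑ k ∈ Finset.Ico 1 n, f (x k))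
      = (f a + f b)/(2*n) + (1/n) * ∑ k ∈ Finset.Ico 1 n, f (x k) := by ring
  linarith [key, e2, h3]
end

section
/- Let f:[a,b]→ℝ be convex and define H:[0,1]→ℝ by H(t) = (1/(b−a)) ∫_a^b f(t·x + (1−t)·(a+b)/2) dx. Then H is convex and monotone nondecreasing on [0,1], with H(0) = f((a+b)/2) = inf_{t∈[0,1]} H(t) and H(1) = (1/(b−a))∫_a^b f(x) dx = sup_{t∈[0,1]} H(t). -/
open MeasureTheory

theorem dragomir_H_mapping
    (a b : ℝ) (hab : a < b) (f : ℝ → ℝ)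
    (hf : ConvexOn ℝ (Set.Icc a b) f)
    (H : ℝ → ℝ)
    (hH : ∀ t, H t = (1 / (b - a)) * ∫ x in a..b, f (t * x + (1 - t) * ((a + b) / 2))) :
    ConvexOn ℝ (Set.Icc (0 : ℝ) 1) H ∧
    MonotoneOn H (Set.Icc (0 : ℝ) 1) ∧
    H 0 = f ((a + b) / 2) ∧
    H 1 = (1 / (b - a)) * ∫ x in a..b, f x ∧
    (∀ t ∈ Set.Icc (0 : ℝ) 1, H 0 ≤ H t) ∧
    (∀ t ∈ Set.Icc (0 : ℝ) 1, H t ≤ H 1) := by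
  set m : ℝ := (a + b) / 2 with hm_def
  have hba : (0:ℝ) < b - a := by linarith
  have hm : m ∈ Set.Icc a b := ⟨by simp [hm_def]; linarith, by simp [hm_def]; linarith⟩
  -- upper bound for f on [a,b]
  have hub : ∀ x ∈ Set.Icc a b, f x ≤ max (f a) (f b) := by
    intro x hx
    obtain ⟨hx1, hx2⟩ := hx
    set t : ℝ := (x - a) / (b - a) with ht_def
    have ht0 : 0 ≤ t := div_nonneg (by linarith) hba.le
    have ht1 : t ≤ 1 := by
      rw [ht_def, div_le_one hba]; linarith
    have hx_eq : x = (1 - t) * a + t * b := by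
      have h : t * (b - a) = x - a := by rw [ht_def]; field_simp
      linear_combination -h
    have := hf.2 (Set.left_mem_Icc.2 hab.le) (Set.right_mem_Icc.2 hab.le)
      (by linarith : (0:ℝ) ≤ 1 - t) ht0 (by ring)
    simp only [smul_eq_mul] at this
    rw [hx_eq]
    calc f ((1 - t) * a + t * b) ≤ (1 - t) * f a + t * f b := this
      _ ≤ (1 - t) * max (f a) (f b) + t * max (f a) (f b) := by
          have h1 := mul_le_mul_of_nonneg_left (le_max_left (f a) (f b))
            (by linarith : (0:ℝ) ≤ 1 - t)
          have h2 := mul_le_mul_of_nonneg_left (le_max_right (f a) (f b)) ht0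
          linarith
      _ = max (f a) (f b) := by ring
  -- lower bound
  have hlb : ∀ x ∈ Set.Icc a b, 2 * f m - max (f a) (f b) ≤ f x := by
    intro x hx
    have hx' : a + b - x ∈ Set.Icc a b := ⟨by linarith [hx.2], by linarith [hx.1]⟩
    have := hf.2 hx hx' (by norm_num : (0:ℝ) ≤ 1/2) (by norm_num : (0:ℝ) ≤ 1/2) (by norm_num)
    simp only [smul_eq_mul] at this
    have harg : (1/2 : ℝ) * x + (1/2 : ℝ) * (a + b - x) = m := by rw [hm_def]; ring
    rw [harg] at this
    have := hub _ hx'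
    linarith
  -- f is interval integrable on [a,b]
  have hfi : IntervalIntegrable f volume a b := by
    rw [intervalIntegrable_iff_integrableOn_Ioc_of_le hab.le]
    have hcont : ContinuousOn f (Set.Ioo a b) := by
      have := hf.continuousOn_interior
      rwa [interior_Icc] at this
    have hIoo : IntegrableOn f (Set.Ioo a b) volume := by
      refine Integrable.mono' (g := fun _ => |max (f a) (f b)| + |2 * f m - max (f a) (f b)|)
        ?_ (hcont.aestronglyMeasurable measurableSet_Ioo) ?_
      · exact integrableOn_const measure_Ioo_lt_top.ne
      · refine (ae_restrict_iff' measurableSet_Ioo).2 (ae_of_all _ fun x hx => ?_)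
        have h1 := hub x (Set.Ioo_subset_Icc_self hx)
        have h2 := hlb x (Set.Ioo_subset_Icc_self hx)
        rw [Real.norm_eq_abs, abs_le]
        constructor
        · show -(|max (f a) (f b)| + |2 * f m - max (f a) (f b)|) ≤ f x
          have := neg_abs_le (2 * f m - max (f a) (f b))
          have := abs_nonneg (max (f a) (f b))
          linarith
        · show f x ≤ |max (f a) (f b)| + |2 * f m - max (f a) (f b)|
          have := le_abs_self (max (f a) (f b))
          have := abs_nonneg (2 * f m - max (f a) (f b))
          linarith
    exact hIoo.congr_set_ae (MeasureTheory.Ioo_ae_eq_Ioc).symm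
  -- the affine map sends [a,b] to [a,b]
  have hmem : ∀ t ∈ Set.Icc (0:ℝ) 1, ∀ x ∈ Set.Icc a b,
      t * x + (1 - t) * m ∈ Set.Icc a b := by
    intro t ht x hx
    constructor
    · nlinarith [mul_nonneg ht.1 (sub_nonneg.2 hx.1),
        mul_nonneg (sub_nonneg.2 ht.2) (sub_nonneg.2 hm.1)]
    · nlinarith [mul_nonneg ht.1 (sub_nonneg.2 hx.2),
        mul_nonneg (sub_nonneg.2 ht.2) (sub_nonneg.2 hm.2)]
  -- integrability of the integrand
  have hKint : ∀ t ∈ Set.Icc (0:ℝ) 1,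
      IntervalIntegrable (fun x => f (t * x + (1 - t) * m)) volume a b := by
    intro t ht
    rcases eq_or_lt_of_le ht.1 with h0 | h0
    · simp only [← h0, zero_mul, zero_add, sub_zero, one_mul]
      exact intervalIntegrable_const
    · have ht0 : t ≠ 0 := ne_of_gt h0
      have hmem_a := hmem t ht a (Set.left_mem_Icc.2 hab.le)
      have hmem_b := hmem t ht b (Set.right_mem_Icc.2 hab.le)
      have h1 : IntervalIntegrable f volume (t * a + (1 - t) * m) (t * b + (1 - t) * m) := by
        apply hfi.mono_set
        apply Set.uIcc_subset_uIcc <;> rw [Set.uIcc_of_le hab.le] <;> assumption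
      have h2 := h1.comp_add_right ((1 - t) * m)
      rw [show t * a + (1 - t) * m - (1 - t) * m = t * a by ring,
          show t * b + (1 - t) * m - (1 - t) * m = t * b by ring] at h2
      have h3 := h2.comp_mul_left (c := t)
      rw [show t * a / t = a by field_simp, show t * b / t = b by field_simp] at h3
      exact h3
  -- key inequality : (b-a) * f m ≤ ∫ f(t x + (1-t) m)
  have hkey : ∀ t ∈ Set.Icc (0:ℝ) 1,
      (b - a) * f m ≤ ∫ x in a..b, f (t * x + (1 - t) * m) := by
    intro t ht
    have hg := hKint t ht
    have hg' : IntervalIntegrable (fun x => f (t * (a + b - x) + (1 - t) * m)) volume a b := by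
      have h := hg.comp_sub_left (a + b)
      rw [show a + b - a = b by ring, show a + b - b = a by ring] at h
      exact h.symm
    have hrev : (∫ x in a..b, f (t * (a + b - x) + (1 - t) * m))
        = ∫ x in a..b, f (t * x + (1 - t) * m) := by
      have h := intervalIntegral.integral_comp_sub_left
        (a := a) (b := b) (fun x => f (t * x + (1 - t) * m)) (a + b)
      rw [show a + b - a = b by ring, show a + b - b = a by ring] at h
      exact h
    have hpt : ∀ x ∈ Set.Icc a b,
        2 * f m ≤ f (t * x + (1 - t) * m) + f (t * (a + b - x) + (1 - t) * m) := by
      intro x hx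
      have hx' : a + b - x ∈ Set.Icc a b := ⟨by linarith [hx.2], by linarith [hx.1]⟩
      have h1 := hmem t ht x hx
      have h2 := hmem t ht _ hx'
      have := hf.2 h1 h2 (by norm_num : (0:ℝ) ≤ 1/2) (by norm_num : (0:ℝ) ≤ 1/2) (by norm_num)
      simp only [smul_eq_mul] at this
      rw [show (1/2:ℝ) * (t * x + (1 - t) * m) + (1/2:ℝ) * (t * (a + b - x) + (1 - t) * m) = m
        by rw [hm_def]; ring] at this
      linarith
    have hint : (∫ _x in a..b, (2 * f m : ℝ))
        ≤ ∫ x in a..b, (f (t * x + (1 - t) * m) + f (t * (a + b - x) + (1 - t) * m)) :=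
      intervalIntegral.integral_mono_on hab.le intervalIntegrable_const (hg.add hg') hpt
    rw [intervalIntegral.integral_const, intervalIntegral.integral_add hg hg', hrev,
      smul_eq_mul] at hint
    linarith
  have hba' : b - a ≠ 0 := ne_of_gt hba
  -- endpoint values
  have hH0 : H 0 = f m := by
    rw [hH]
    norm_num [intervalIntegral.integral_const]
    field_simp
  have hH1 : H 1 = (1 / (b - a)) * ∫ x in a..b, f x := by
    rw [hH]; norm_num
  -- minimum at 0
  have hmin : ∀ t ∈ Set.Icc (0:ℝ) 1, H 0 ≤ H t := by
    intro t ht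
    rw [hH0, hH t]
    calc f m = 1/(b-a) * ((b-a) * f m) := by field_simp
      _ ≤ 1/(b-a) * ∫ x in a..b, f (t * x + (1 - t) * m) :=
          mul_le_mul_of_nonneg_left (hkey t ht) (by positivity)
  -- (b-a) f m ≤ ∫ f
  have hfm_int : (b - a) * f m ≤ ∫ x in a..b, f x := by
    have := hkey 1 (by norm_num)
    simpa using this
  -- maximum at 1
  have hmax : ∀ t ∈ Set.Icc (0:ℝ) 1, H t ≤ H 1 := by
    intro t ht
    rw [hH t, hH1]
    have h1t : 0 ≤ 1 - t := by linarith [ht.2]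
    have hpt : ∀ x ∈ Set.Icc a b, f (t * x + (1 - t) * m) ≤ t * f x + (1 - t) * f m := by
      intro x hx
      have := hf.2 hx hm ht.1 h1t (by ring)
      simpa [smul_eq_mul] using this
    have hint := intervalIntegral.integral_mono_on hab.le (hKint t ht)
      ((hfi.const_mul t).add intervalIntegrable_const) hpt
    rw [intervalIntegral.integral_add (hfi.const_mul t) intervalIntegrable_const,
      intervalIntegral.integral_const_mul, intervalIntegral.integral_const, smul_eq_mul] at hint
    have hle : (∫ x in a..b, f (t * x + (1 - t) * m)) ≤ ∫ x in a..b, f x := by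
      nlinarith [mul_le_mul_of_nonneg_left hfm_int h1t]
    exact mul_le_mul_of_nonneg_left hle (by positivity)
  -- convexity of H
  have hconv : ConvexOn ℝ (Set.Icc (0:ℝ) 1) H := by
    refine ⟨convex_Icc 0 1, fun t ht s hs α β hα hβ hαβ => ?_⟩
    have htot : α * t + β * s ∈ Set.Icc (0:ℝ) 1 := by
      have := (convex_Icc (0:ℝ) 1) ht hs hα hβ hαβ
      simpa [smul_eq_mul] using this
    simp only [smul_eq_mul]
    rw [hH, hH, hH]
    have hpt : ∀ x ∈ Set.Icc a b,
        f ((α*t+β*s)*x + (1-(α*t+β*s))*m) ≤ α * f (t*x+(1-t)*m) + β * f (s*x+(1-s)*m) := by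
      intro x hx
      have h1 := hmem t ht x hx
      have h2 := hmem s hs x hx
      have hcc := hf.2 h1 h2 hα hβ hαβ
      simp only [smul_eq_mul] at hcc
      have hβ' : β = 1 - α := by linarith
      rw [show α*(t*x+(1-t)*m) + β*(s*x+(1-s)*m) = (α*t+β*s)*x + (1-(α*t+β*s))*m by
        rw [hβ']; ring] at hcc
      exact hcc
    have hint := intervalIntegral.integral_mono_on hab.le (hKint _ htot)
      (((hKint t ht).const_mul α).add ((hKint s hs).const_mul β)) hpt
    rw [intervalIntegral.integral_add ((hKint t ht).const_mul α) ((hKint s hs).const_mul β),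
      intervalIntegral.integral_const_mul, intervalIntegral.integral_const_mul] at hint
    have hmul := mul_le_mul_of_nonneg_left hint (by positivity : (0:ℝ) ≤ 1/(b-a))
    nlinarith [hmul]
  -- monotonicity from convexity and minimum at 0
  have hmono : MonotoneOn H (Set.Icc (0:ℝ) 1) := by
    intro s hs t ht hst
    rcases eq_or_lt_of_le (hs.1.trans hst) with h0 | h0
    · have hs0 : s = 0 := le_antisymm (hst.trans h0.symm.le) hs.1
      rw [hs0, ← h0]
    · have hst1 : s / t ≤ 1 := (div_le_one h0).2 hst
      have hst0 : 0 ≤ s / t := div_nonneg hs.1 h0.le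
      have hcomb := hconv.2 (Set.left_mem_Icc.mpr zero_le_one) ht
        (by linarith : (0:ℝ) ≤ 1 - s/t) hst0 (by ring)
      simp only [smul_eq_mul, mul_zero, zero_add] at hcomb
      rw [show s / t * t = s from by field_simp] at hcomb
      nlinarith [mul_le_mul_of_nonneg_left (hmin t ht) (by linarith : (0:ℝ) ≤ 1 - s/t), hcomb]
  exact ⟨hconv, hmono, hH0, hH1, hmin, hmax⟩
end

section
/- Let f:[a,b]→ℝ be convex, n∈ℕ, n≥1, h=(b−a)/n, x_k = a+k·h, and define H:[0,1]→ℝ by H(t) = ∑_{j=1}^{n} (1/h)∫_{x_{j−1}}^{x_j} f(t·u + (1−t)·(x_{j−1}+x_j)/2) du. Then H is convex and nondecreasing on [0,1], inf_{t∈[0,1]} H(t) = H(0) = ∑_{k=1}^{n} f((x_{k−1}+x_k)/2), and sup_{t∈[0,1]} H(t) = H(1) = (1/h)∫_a^b f(u) du. -/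
open MeasureTheory Finset

lemma convexOn_intervalIntegrable_s17 {c d : ℝ} (hcd : c ≤ d) {g : ℝ → ℝ}
    (hg : ConvexOn ℝ (Set.Icc c d) g) : IntervalIntegrable g volume c d := by
  rcases eq_or_lt_of_le hcd with rfl | hlt
  · exact IntervalIntegrable.refl
  set M : ℝ := max (g c) (g d) with hM
  have hub : ∀ u ∈ Set.Icc c d, g u ≤ M := by
    intro u hu
    exact hg.le_on_segment (Set.left_mem_Icc.2 hcd) (Set.right_mem_Icc.2 hcd)
      ((segment_eq_Icc hcd) ▸ hu)
  have hlb : ∀ u ∈ Set.Icc c d, 2 * g ((c + d) / 2) - M ≤ g u := by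
    intro u hu
    have hv : c + d - u ∈ Set.Icc c d := by
      constructor <;> [linarith [hu.2]; linarith [hu.1]]
    have := hg.2 hu hv (by norm_num : (0:ℝ) ≤ 1/2) (by norm_num : (0:ℝ) ≤ 1/2) (by norm_num)
    simp only [smul_eq_mul] at this
    have harg : (1/2 : ℝ) * u + (1/2 : ℝ) * (c + d - u) = (c + d) / 2 := by
      ring
    rw [harg] at this
    have := hub _ hv
    nlinarith
  rw [intervalIntegrable_iff_integrableOn_Ioo_of_le hcd]
  have hcont : ContinuousOn g (Set.Ioo c d) :=
    (hg.subset Set.Ioo_subset_Icc_self (convex_Ioo c d)).continuousOn isOpen_Ioo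
  refine ⟨(hcont.aestronglyMeasurable measurableSet_Ioo), ?_⟩
  apply HasFiniteIntegral.restrict_of_bounded
    (C := max |M| |2 * g ((c + d) / 2) - M|) measure_Ioo_lt_top
  filter_upwards [ae_restrict_mem measurableSet_Ioo] with u hu
  have h1 := hub u (Set.Ioo_subset_Icc_self hu)
  have h2 := hlb u (Set.Ioo_subset_Icc_self hu)
  rw [Real.norm_eq_abs, abs_le]
  constructor
  · nlinarith [neg_abs_le (2 * g ((c + d) / 2) - M), le_max_right |M| |2 * g ((c + d) / 2) - M|]
  · exact h1.trans ((le_abs_self M).trans (le_max_left _ _))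

theorem composite_H_mapping
    (a b : ℝ) (hab : a < b) (f : ℝ → ℝ)
    (hf : ConvexOn ℝ (Set.Icc a b) f)
    (n : ℕ) (hn : 1 ≤ n)
    (h : ℝ) (hh : h = (b - a) / n)
    (x : ℕ → ℝ) (hx : ∀ k, x k = a + k * h)
    (H : ℝ → ℝ)
    (hH : ∀ t, H t = ∑ j ∈ Finset.range n,
      (1 / h) * ∫ u in (x j)..(x (j + 1)), f (t * u + (1 - t) * ((x j + x (j + 1)) / 2))) :
    ConvexOn ℝ (Set.Icc (0 : ℝ) 1) H ∧
    MonotoneOn H (Set.Icc (0 : ℝ) 1) ∧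
    H 0 = ∑ k ∈ Finset.range n, f ((x k + x (k + 1)) / 2) ∧
    H 1 = (1 / h) * ∫ u in a..b, f u ∧
    (∀ t ∈ Set.Icc (0 : ℝ) 1, H 0 ≤ H t) ∧
    (∀ t ∈ Set.Icc (0 : ℝ) 1, H t ≤ H 1) := by
  have hnR : (0:ℝ) < n := by exact_mod_cast hn
  have hh0 : 0 < h := by rw [hh]; exact div_pos (by linarith) hnR
  have hstep : ∀ j : ℕ, x (j + 1) - x j = h := by
    intro j; rw [hx, hx]; push_cast; ring
  have hxle : ∀ j : ℕ, x j ≤ x (j + 1) := by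
    intro j; nlinarith [hstep j]
  have hnh : (n:ℝ) * h = b - a := by
    rw [hh]; field_simp
  have hmem : ∀ j : ℕ, j < n → Set.Icc (x j) (x (j + 1)) ⊆ Set.Icc a b := by
    intro j hj
    apply Set.Icc_subset_Icc
    · rw [hx]; nlinarith [Nat.cast_nonneg (α := ℝ) j]
    · rw [hx]
      have : ((j:ℝ) + 1) ≤ n := by exact_mod_cast hj
      push_cast
      nlinarith
  have hmid : ∀ j : ℕ, (x j + x (j + 1)) / 2 ∈ Set.Icc (x j) (x (j + 1)) := by
    intro j
    constructor <;> nlinarith [hxle j]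
  have hmemaff : ∀ t ∈ Set.Icc (0:ℝ) 1, ∀ j : ℕ, j < n →
      ∀ u ∈ Set.Icc (x j) (x (j + 1)),
      t * u + (1 - t) * ((x j + x (j + 1)) / 2) ∈ Set.Icc a b := by
    intro t ht j hj u hu
    have h1 : u ∈ Set.Icc a b := hmem j hj hu
    have h2 : (x j + x (j + 1)) / 2 ∈ Set.Icc a b := hmem j hj (hmid j)
    have : t • u + (1 - t) • ((x j + x (j + 1)) / 2) ∈ Set.Icc a b :=
      (convex_Icc a b) h1 h2 ht.1 (by linarith [ht.2]) (by ring)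
    simpa using this
  -- integrability of the integrand
  have hgint : ∀ t ∈ Set.Icc (0:ℝ) 1, ∀ j : ℕ, j < n →
      IntervalIntegrable (fun u => f (t * u + (1 - t) * ((x j + x (j + 1)) / 2)))
        volume (x j) (x (j + 1)) := by
    intro t ht j hj
    apply convexOn_intervalIntegrable_s17 (hxle j)
    refine ⟨convex_Icc _ _, ?_⟩
    intro u hu v hv p q hp hq hpq
    simp only [smul_eq_mul]
    obtain rfl : q = 1 - p := by linarith
    have harg : t * (p * u + (1 - p) * v) + (1 - t) * ((x j + x (j + 1)) / 2)
        = p * (t * u + (1 - t) * ((x j + x (j + 1)) / 2))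
          + (1 - p) * (t * v + (1 - t) * ((x j + x (j + 1)) / 2)) := by ring
    rw [harg]
    have := hf.2 (hmemaff t ht j hj u hu) (hmemaff t ht j hj v hv) hp hq (by ring)
    simpa using this
  -- value at 0
  have h0 : H 0 = ∑ k ∈ Finset.range n, f ((x k + x (k + 1)) / 2) := by
    rw [hH 0]
    apply Finset.sum_congr rfl
    intro j _
    simp only [zero_mul, zero_add, sub_zero, one_mul]
    rw [intervalIntegral.integral_const, smul_eq_mul, hstep j]
    field_simp
  -- value at 1
  have h1 : H 1 = (1 / h) * ∫ u in a..b, f u := by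
    rw [hH 1]
    simp only [one_mul, sub_self, zero_mul, add_zero]
    rw [← Finset.mul_sum]
    congr 1
    rw [intervalIntegral.sum_integral_adjacent_intervals (fun k hk =>
      convexOn_intervalIntegrable_s17 (hxle k) (hf.subset (hmem k hk) (convex_Icc _ _)))]
    congr 1
    · rw [hx]; push_cast; ring
    · rw [hx]; nlinarith [hnh]
  -- convexity
  have hconv : ConvexOn ℝ (Set.Icc (0:ℝ) 1) H := by
    refine ⟨convex_Icc 0 1, ?_⟩
    intro s hs t ht p q hp hq hpq
    simp only [smul_eq_mul]
    obtain rfl : q = 1 - p := by linarith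
    have hmemst : p * s + (1 - p) * t ∈ Set.Icc (0:ℝ) 1 := by
      constructor <;> nlinarith [hs.1, hs.2, ht.1, ht.2]
    rw [hH (p * s + (1 - p) * t), hH s, hH t, Finset.mul_sum, Finset.mul_sum,
      ← Finset.sum_add_distrib]
    apply Finset.sum_le_sum
    intro j hj
    have hj' := Finset.mem_range.1 hj
    have ints := hgint s hs j hj'
    have intt := hgint t ht j hj'
    have intc := hgint _ hmemst j hj'
    have step1 : (∫ u in (x j)..(x (j+1)),
        f ((p * s + (1 - p) * t) * u + (1 - (p * s + (1 - p) * t)) * ((x j + x (j + 1)) / 2)))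
        ≤ ∫ u in (x j)..(x (j+1)),
          (p * f (s * u + (1 - s) * ((x j + x (j + 1)) / 2))
           + (1 - p) * f (t * u + (1 - t) * ((x j + x (j + 1)) / 2))) := by
      apply intervalIntegral.integral_mono_on (hxle j) intc
        ((ints.const_mul p).add (intt.const_mul (1 - p)))
      intro u hu
      have harg : (p * s + (1 - p) * t) * u + (1 - (p * s + (1 - p) * t)) * ((x j + x (j + 1)) / 2)
          = p * (s * u + (1 - s) * ((x j + x (j + 1)) / 2))
            + (1 - p) * (t * u + (1 - t) * ((x j + x (j + 1)) / 2)) := by ring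
      rw [harg]
      have := hf.2 (hmemaff s hs j hj' u hu) (hmemaff t ht j hj' u hu) hp hq (by ring)
      simpa using this
    rw [intervalIntegral.integral_add (ints.const_mul p) (intt.const_mul (1 - p)),
      intervalIntegral.integral_const_mul, intervalIntegral.integral_const_mul] at step1
    have h1h : (0:ℝ) ≤ 1 / h := by positivity
    nlinarith [mul_le_mul_of_nonneg_left step1 h1h]
  -- H 0 ≤ H t
  have h0le : ∀ t ∈ Set.Icc (0:ℝ) 1, H 0 ≤ H t := by
    intro t ht
    rw [h0, hH t]
    apply Finset.sum_le_sum
    intro j hj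
    have hj' := Finset.mem_range.1 hj
    set m := (x j + x (j + 1)) / 2 with hm
    have hint := hgint t ht j hj'
    have hint2 : IntervalIntegrable (fun u => f (t * (x j + x (j+1) - u) + (1 - t) * m))
        volume (x j) (x (j+1)) := by
      have h2 := hint.comp_sub_left (x j + x (j + 1))
      rw [show x j + x (j+1) - x (j+1) = x j by ring, show x j + x (j+1) - x j = x (j+1) by ring]
        at h2
      exact h2.symm
    have hrefl : (∫ u in (x j)..(x (j+1)), f (t * (x j + x (j+1) - u) + (1 - t) * m))
        = ∫ u in (x j)..(x (j+1)), f (t * u + (1 - t) * m) := by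
      rw [intervalIntegral.integral_comp_sub_left (fun u => f (t * u + (1 - t) * m))]
      congr 1 <;> ring
    have key : h * (2 * f m) ≤ (∫ u in (x j)..(x (j+1)), f (t * u + (1 - t) * m))
        + ∫ u in (x j)..(x (j+1)), f (t * (x j + x (j+1) - u) + (1 - t) * m) := by
      have mono : (∫ _u in (x j)..(x (j+1)), 2 * f m)
          ≤ ∫ u in (x j)..(x (j+1)), (f (t * u + (1 - t) * m)
              + f (t * (x j + x (j+1) - u) + (1 - t) * m)) := by
        apply intervalIntegral.integral_mono_on (hxle j) intervalIntegrable_const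
          (hint.add hint2)
        intro u hu
        have hu2 : x j + x (j+1) - u ∈ Set.Icc (x j) (x (j+1)) := by
          constructor <;> [linarith [hu.2]; linarith [hu.1]]
        have hA := hmemaff t ht j hj' u hu
        have hB := hmemaff t ht j hj' _ hu2
        have := hf.2 hA hB (by norm_num : (0:ℝ) ≤ 1/2) (by norm_num : (0:ℝ) ≤ 1/2) (by norm_num)
        simp only [smul_eq_mul] at this
        have harg : (1/2 : ℝ) * (t * u + (1 - t) * m)
            + (1/2 : ℝ) * (t * (x j + x (j+1) - u) + (1 - t) * m) = m := by
          rw [hm]; ring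
        rw [harg] at this
        linarith
      rw [intervalIntegral.integral_const, intervalIntegral.integral_add hint hint2,
        smul_eq_mul, hstep j] at mono
      linarith
    rw [hrefl] at key
    have h1h : (0:ℝ) ≤ 1 / h := by positivity
    have := mul_le_mul_of_nonneg_left key h1h
    have hcancel : 1 / h * (h * (2 * f m)) = 2 * f m := by field_simp
    rw [hcancel] at this
    linarith
  -- monotone
  have hmono : MonotoneOn H (Set.Icc (0:ℝ) 1) := by
    intro s hs t ht hst
    rcases eq_or_lt_of_le ht.1 with heq | hpos
    · have : s = t := le_antisymm hst (heq ▸ hs.1)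
      rw [this]
    · have hb1 : (0:ℝ) ≤ s / t := div_nonneg hs.1 hpos.le
      have hb2 : s / t ≤ 1 := (div_le_one hpos).2 hst
      have key := hconv.2 (Set.left_mem_Icc.2 zero_le_one) ht
        (by linarith : (0:ℝ) ≤ 1 - s / t) hb1 (by ring)
      simp only [smul_eq_mul, mul_zero, zero_add] at key
      rw [div_mul_cancel₀ s hpos.ne'] at key
      have := h0le t ht
      nlinarith
  refine ⟨hconv, hmono, h0, h1, h0le, fun t ht => hmono ht (Set.right_mem_Icc.2 zero_le_one) ht.2⟩
end

section
/- Let f:[a,b]→ℝ be convex, n∈ℕ, n≥1, h=(b−a)/n, x_k=a+k·h. Then ∑_{k=1}^{n} f((x_{k−1}+x_k)/2) − ∑_{k=1}^{n−1} f(x_k) ≤ (1/h)∫_a^b f(t) dt − ∑_{k=1}^{n−1} f(x_k) ≤ (f(a)+f(b))/2. -/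
open MeasureTheory Finset

/-- A convex function on a closed interval is integrable on it. -/
lemma convexOn_integrableOn_Icc (a b : ℝ) (hab : a < b) (f : ℝ → ℝ)
    (hf : ConvexOn ℝ (Set.Icc a b) f) :
    MeasureTheory.IntegrableOn f (Set.Icc a b) := by
  have hmem : ∀ t ∈ Set.Icc a b, a + b - t ∈ Set.Icc a b := by
    intro t ht
    exact ⟨by linarith [ht.2], by linarith [ht.1]⟩
  set M : ℝ := max (f a) (f b) with hM
  have hma : a ∈ Set.Icc a b := ⟨le_refl a, hab.le⟩
  have hmb : b ∈ Set.Icc a b := ⟨hab.le, le_refl b⟩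
  have hmid : (a + b) / 2 ∈ Set.Icc a b := ⟨by linarith, by linarith⟩
  have hub : ∀ t ∈ Set.Icc a b, f t ≤ M := by
    intro t ht
    obtain ⟨u, v, hu, hv, huv, hts⟩ : ∃ u v : ℝ, 0 ≤ u ∧ 0 ≤ v ∧ u + v = 1 ∧
        u • a + v • b = t := by
      have hba : (0:ℝ) < b - a := by linarith
      refine ⟨(b - t) / (b - a), (t - a) / (b - a),
        div_nonneg (by linarith [ht.2]) hba.le,
        div_nonneg (by linarith [ht.1]) hba.le, ?_, ?_⟩
      · field_simp; ring
      · simp only [smul_eq_mul]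
        field_simp
        ring
    calc f t = f (u • a + v • b) := by rw [hts]
    _ ≤ M := hf.le_on_segment' hma hmb hu hv huv
  have hlb : ∀ t ∈ Set.Icc a b, 2 * f ((a + b) / 2) - M ≤ f t := by
    intro t ht
    have h1 : f ((a + b) / 2) ≤ (1/2) * f t + (1/2) * f (a + b - t) := by
      have := hf.2 ht (hmem t ht) (by norm_num : (0:ℝ) ≤ 1/2)
        (by norm_num : (0:ℝ) ≤ 1/2) (by norm_num)
      have e : (1/2 : ℝ) • t + (1/2 : ℝ) • (a + b - t) = (a + b) / 2 := by
        simp only [smul_eq_mul]; ring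
      rw [e] at this
      simpa [smul_eq_mul] using this
    have h2 : f (a + b - t) ≤ M := hub _ (hmem t ht)
    linarith
  have hbound : ∀ t ∈ Set.Icc a b, |f t| ≤ |M| + |2 * f ((a + b) / 2) - M| := by
    intro t ht
    rw [abs_le]
    constructor
    · have := hlb t ht
      have : -(|2 * f ((a + b) / 2) - M|) ≤ f t := by
        have := neg_abs_le (2 * f ((a + b) / 2) - M); linarith
      have h0 : (0:ℝ) ≤ |M| := abs_nonneg _
      linarith
    · have := hub t ht
      have h1 : M ≤ |M| := le_abs_self _
      have h0 : (0:ℝ) ≤ |2 * f ((a + b) / 2) - M| := abs_nonneg _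
      linarith
  -- integrable on the open interval
  have hcont : ContinuousOn f (Set.Ioo a b) := by
    have := hf.continuousOn_interior
    rwa [interior_Icc] at this
  have hIoo : MeasureTheory.IntegrableOn f (Set.Ioo a b) := by
    refine MeasureTheory.Integrable.mono'
      (g := fun _ => |M| + |2 * f ((a + b) / 2) - M|)
      (integrableOn_const measure_Ioo_lt_top.ne) ?_ ?_
    · exact hcont.aestronglyMeasurable measurableSet_Ioo
    · filter_upwards [ae_restrict_mem measurableSet_Ioo] with t ht
      exact hbound t (Set.Ioo_subset_Icc_self ht)
  have hnull : MeasureTheory.IntegrableOn f {a, b} := by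
    have h1 : MeasureTheory.IntegrableOn f {a} :=
      (integrableOn_singleton_iff).mpr (Or.inr (by simp [Real.volume_singleton]))
    have h2 : MeasureTheory.IntegrableOn f {b} :=
      (integrableOn_singleton_iff).mpr (Or.inr (by simp [Real.volume_singleton]))
    have : ({a, b} : Set ℝ) = {a} ∪ {b} := Set.insert_eq a {b}
    rw [this]
    exact h1.union h2
  have : Set.Icc a b ⊆ Set.Ioo a b ∪ {a, b} := by
    intro t ht
    rcases eq_or_lt_of_le ht.1 with h1 | h1
    · exact Or.inr (Or.inl h1.symm)
    rcases eq_or_lt_of_le ht.2 with h2 | h2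
    · exact Or.inr (Or.inr h2)
    · exact Or.inl ⟨h1, h2⟩
  exact (hIoo.union hnull).mono_set this


/-- Hermite–Hadamard on a subinterval. -/
lemma interval_hh (a b : ℝ) (hab : a < b) (f : ℝ → ℝ)
    (hf : ConvexOn ℝ (Set.Icc a b) f)
    (c d : ℝ) (hcd : c < d) (hca : a ≤ c) (hdb : d ≤ b) :
    (d - c) * f ((c + d) / 2) ≤ (∫ t in c..d, f t) ∧
    (∫ t in c..d, f t) ≤ (d - c) * ((f c + f d) / 2) := by
  have hsub : Set.Icc c d ⊆ Set.Icc a b := Set.Icc_subset_Icc hca hdb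
  have hint : IntervalIntegrable f volume c d := by
    apply MeasureTheory.IntegrableOn.intervalIntegrable
    rw [Set.uIcc_of_le hcd.le]
    exact (convexOn_integrableOn_Icc a b hab f hf).mono_set hsub
  have hmem : ∀ t ∈ Set.Icc c d, c + d - t ∈ Set.Icc c d := fun t ht =>
    ⟨by linarith [ht.2], by linarith [ht.1]⟩
  constructor
  · -- left inequality
    have hint2 : IntervalIntegrable (fun t => f (c + d - t)) volume c d := by
      have := hint.comp_sub_left (c + d)
      have e1 : c + d - c = d := by ring
      have e2 : c + d - d = c := by ring
      rw [e1, e2] at this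
      exact this.symm
    have hrefl : (∫ t in c..d, f (c + d - t)) = ∫ t in c..d, f t := by
      have := intervalIntegral.integral_comp_sub_left (a := c) (b := d) f (c + d)
      have e1 : c + d - c = d := by ring
      have e2 : c + d - d = c := by ring
      rw [e1, e2] at this
      exact this
    have hptw : ∀ t ∈ Set.Icc c d, 2 * f ((c + d) / 2) ≤ f t + f (c + d - t) := by
      intro t ht
      have h2 := hf.2 (hsub ht) (hsub (hmem t ht)) (by norm_num : (0:ℝ) ≤ 1/2)
        (by norm_num : (0:ℝ) ≤ 1/2) (by norm_num)
      have e : (1/2 : ℝ) • t + (1/2 : ℝ) • (c + d - t) = (c + d) / 2 := by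
        simp only [smul_eq_mul]; ring
      rw [e] at h2
      simp only [smul_eq_mul] at h2
      linarith
    have hmono := intervalIntegral.integral_mono_on hcd.le
      (intervalIntegrable_const (c := 2 * f ((c + d) / 2))) (hint.add hint2) hptw
    rw [intervalIntegral.integral_const, intervalIntegral.integral_add hint hint2,
      hrefl, smul_eq_mul] at hmono
    linarith
  · -- right inequality
    set B : ℝ := (f d - f c) / (d - c) with hB
    have hptw : ∀ t ∈ Set.Icc c d, f t ≤ f c + (t - c) * B := by
      intro t ht
      have hdc : (0:ℝ) < d - c := by linarith
      have hu : (0:ℝ) ≤ (d - t) / (d - c) := div_nonneg (by linarith [ht.2]) hdc.le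
      have hv : (0:ℝ) ≤ (t - c) / (d - c) := div_nonneg (by linarith [ht.1]) hdc.le
      have huv : (d - t) / (d - c) + (t - c) / (d - c) = 1 := by
        field_simp; ring
      have h2 := hf.2 (hsub ⟨le_refl c, hcd.le⟩ : c ∈ Set.Icc a b)
        (hsub ⟨hcd.le, le_refl d⟩ : d ∈ Set.Icc a b) hu hv huv
      have e : ((d - t) / (d - c)) • c + ((t - c) / (d - c)) • d = t := by
        simp only [smul_eq_mul]
        field_simp
        ring
      rw [e] at h2
      simp only [smul_eq_mul] at h2
      have e2 : (d - t) / (d - c) * f c + (t - c) / (d - c) * f d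
          = f c + (t - c) * B := by
        rw [hB]
        field_simp
        ring
      linarith
    have hcont2 : IntervalIntegrable (fun t => f c + (t - c) * B) volume c d :=
      (Continuous.intervalIntegrable (by continuity) c d)
    have hmono := intervalIntegral.integral_mono_on hcd.le hint hcont2 hptw
    have hval : (∫ t in c..d, (f c + (t - c) * B)) = (d - c) * ((f c + f d) / 2) := by
      have hder : ∀ t ∈ Set.uIcc c d,
          HasDerivAt (fun t => f c * t + B * (t - c)^2 / 2) (f c + (t - c) * B) t := by
        intro t _
        have h1 : HasDerivAt (fun t : ℝ => f c * t) (f c) t := by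
          simpa using (hasDerivAt_id t).const_mul (f c)
        have h2 : HasDerivAt (fun t : ℝ => B * (t - c)^2 / 2) (B * (2 * (t - c)) / 2) t := by
          have : HasDerivAt (fun t : ℝ => (t - c)^2) (2 * (t - c)) t := by
            have h := ((hasDerivAt_id t).sub_const c).pow 2
            simp at h
            exact h
          exact (this.const_mul B).div_const 2
        have := h1.add h2
        exact this.congr_deriv (by ring)
      rw [intervalIntegral.integral_eq_sub_of_hasDerivAt hder hcont2]
      have hdc : (d : ℝ) - c ≠ 0 := by intro hh; linarith [hcd]
      rw [hB]
      field_simp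
      ring
    linarith

lemma tele_sum (g : ℕ → ℝ) : ∀ n : ℕ, 1 ≤ n →
    ∑ k ∈ Finset.range n, (g k + g (k + 1)) / 2
      = (g 0 + g n) / 2 + ∑ k ∈ Finset.Ico 1 n, g k := by
  intro n
  induction n with
  | zero => intro hh; omega
  | succ m ih =>
    intro _
    rcases Nat.eq_or_lt_of_le (Nat.one_le_iff_ne_zero.mpr (Nat.succ_ne_zero m) :
        1 ≤ m + 1) with h1 | h1
    · simp [← h1]
    · have hm : 1 ≤ m := by omega
      rw [Finset.sum_range_succ, ih hm, Finset.sum_Ico_succ_top hm]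
      ring

theorem hermite_hadamard_ostrowski_form
    (a b : ℝ) (hab : a < b) (f : ℝ → ℝ)
    (hf : ConvexOn ℝ (Set.Icc a b) f)
    (n : ℕ) (hn : 1 ≤ n)
    (h : ℝ) (hh : h = (b - a) / n)
    (x : ℕ → ℝ) (hx : ∀ k, x k = a + k * h) :
    (∑ k ∈ Finset.range n, f ((x k + x (k + 1)) / 2)) - (∑ k ∈ Finset.Ico 1 n, f (x k)) ≤
      (1 / h) * (∫ t in a..b, f t) - (∑ k ∈ Finset.Ico 1 n, f (x k)) ∧
    (1 / h) * (∫ t in a..b, f t) - (∑ k ∈ Finset.Ico 1 n, f (x k)) ≤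
      (f a + f b) / 2 := by
  have hn0 : (0:ℝ) < n := by exact_mod_cast hn
  have hpos : 0 < h := by rw [hh]; exact div_pos (by linarith) hn0
  have hxk : ∀ k : ℕ, x (k + 1) - x k = h := by
    intro k; rw [hx, hx]; push_cast; ring
  have hxlt : ∀ k : ℕ, x k < x (k + 1) := by
    intro k; have := hxk k; linarith
  have x0 : x 0 = a := by simp [hx]
  have xn : x n = b := by
    rw [hx, hh]
    field_simp; ring
  have hmono : ∀ i j : ℕ, i ≤ j → x i ≤ x j := by
    intro i j hij
    rw [hx, hx]
    have : (i:ℝ) ≤ j := by exact_mod_cast hij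
    nlinarith
  have hsub : ∀ k, k < n → Set.Icc (x k) (x (k + 1)) ⊆ Set.Icc a b := by
    intro k hk
    apply Set.Icc_subset_Icc
    · rw [← x0]; exact hmono 0 k (Nat.zero_le k)
    · rw [← xn]; exact hmono (k + 1) n hk
  have hhh : ∀ k, k < n → x (k + 1) - x k = h := fun k _ => hxk k
  have hint : ∀ k, k < n → IntervalIntegrable f volume (x k) (x (k + 1)) := by
    intro k hk
    apply MeasureTheory.IntegrableOn.intervalIntegrable
    rw [Set.uIcc_of_le (hxlt k).le]
    exact (convexOn_integrableOn_Icc a b hab f hf).mono_set (hsub k hk)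
  have hsum : (∑ k ∈ Finset.range n, ∫ t in (x k)..(x (k + 1)), f t) = ∫ t in a..b, f t := by
    rw [intervalIntegral.sum_integral_adjacent_intervals hint, x0, xn]
  have hdecomp : (1 / h) * (∫ t in a..b, f t)
      = ∑ k ∈ Finset.range n, (1 / h) * ∫ t in (x k)..(x (k + 1)), f t := by
    rw [← Finset.mul_sum, hsum]
  have hHH : ∀ k, k < n →
      f ((x k + x (k + 1)) / 2) ≤ (1 / h) * (∫ t in (x k)..(x (k + 1)), f t) ∧
      (1 / h) * (∫ t in (x k)..(x (k + 1)), f t) ≤ (f (x k) + f (x (k + 1))) / 2 := by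
    intro k hk
    have hsubk := hsub k hk
    have h1 : a ≤ x k := (hsubk (Set.left_mem_Icc.mpr (hxlt k).le)).1
    have h2 : x (k + 1) ≤ b := (hsubk (Set.right_mem_Icc.mpr (hxlt k).le)).2
    obtain ⟨hl, hr⟩ := interval_hh a b hab f hf (x k) (x (k + 1)) (hxlt k) h1 h2
    rw [hxk k] at hl hr
    constructor
    · rw [one_div, inv_mul_eq_div, le_div_iff₀ hpos]
      linarith
    · rw [one_div, inv_mul_eq_div, div_le_iff₀ hpos]
      linarith
  constructor
  · apply sub_le_sub_right
    rw [hdecomp]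
    exact Finset.sum_le_sum fun k hk => (hHH k (Finset.mem_range.mp hk)).1
  · rw [sub_le_iff_le_add, hdecomp]
    have hb1 : (∑ k ∈ Finset.range n, (1 / h) * ∫ t in (x k)..(x (k + 1)), f t)
        ≤ ∑ k ∈ Finset.range n, (f (x k) + f (x (k + 1))) / 2 :=
      Finset.sum_le_sum fun k hk => (hHH k (Finset.mem_range.mp hk)).2
    have hb2 := tele_sum (fun k => f (x k)) n hn
    rw [hb2, x0, xn] at hb1
    linarith
end
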